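/- Let A₁ and A₂ be two Hermitian operators on a finite-dimensional Hilbert space H with A₁² = A₂² = I (i.e., eigenvalues ±1). Then H decomposes as an orthogonal direct sum of A₁- and A₂-invariant subspaces each of dimension at most 2. -/

import Mathlib

open scoped InnerProductSpace
open Module Submodule

lemma jordan_aux (H : Type*) [NormedAddCommGroup H]
    [InnerProductSpace ℂ H] [FiniteDimensional ℂ H]
    (A₁ A₂ : H →ₗ[ℂ] H) (hs₁ : A₁.IsSymmetric) (hs₂ : A₂.IsSymmetric)
    (hi₁ : A₁ ∘ₗ A₁ = LinearMap.id) (hi₂ : A₂ ∘ₗ A₂ = LinearMap.id) :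
    ∀ (n : ℕ) (W : Submodule ℂ H), finrank ℂ W = n →
      (∀ x ∈ W, A₁ x ∈ W) → (∀ x ∈ W, A₂ x ∈ W) →
    ∃ (ι : Type) (_ : Fintype ι) (_ : DecidableEq ι) (V : ι → Submodule ℂ H),
      iSup V = W ∧
      (∀ α β, α ≠ β → ∀ x ∈ V α, ∀ y ∈ V β, ⟪x, y⟫_ℂ = 0) ∧
      (∀ α, Module.finrank ℂ (V α) ≤ 2) ∧
      (∀ α, ∀ x ∈ V α, A₁ x ∈ V α ∧ A₂ x ∈ V α) := by
  intro n
  induction n using Nat.strong_induction_on with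
  | _ n IH =>
    intro W hrank hW₁ hW₂
    rcases eq_or_ne W ⊥ with hbot | hbot
    · exact ⟨Empty, inferInstance, inferInstance, fun i => i.elim,
        by simp [hbot], fun α => α.elim, fun α => α.elim, fun α => α.elim⟩
    · -- W nontrivial: pick eigenvector of (A₁+A₂) restricted to W
      have hWsum : ∀ x ∈ W, (A₁ + A₂) x ∈ W := fun x hx => by
        simpa using W.add_mem (hW₁ x hx) (hW₂ x hx)
      have : Nontrivial W := Submodule.nontrivial_iff_ne_bot.mpr hbot
      obtain ⟨μ, hμ⟩ := Module.End.exists_eigenvalue ((A₁ + A₂).restrict hWsum)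
      obtain ⟨w, hw0⟩ := hμ.exists_hasEigenvector
      have hv0' : (w : H) ≠ 0 := fun h => hw0.2 (Subtype.ext h)
      have hvW : (w : H) ∈ W := w.2
      have heig : A₁ (w : H) + A₂ (w : H) = μ • (w : H) := by
        have := congrArg (Subtype.val) hw0.apply_eq_smul
        simpa [LinearMap.restrict_apply] using this
      set u : H := (w : H) with hu
      set U : Submodule ℂ H := span ℂ {u, A₁ u} with hUdef
      have hA1sq : ∀ x : H, A₁ (A₁ x) = x := fun x =>
        congrFun (congrArg DFunLike.coe hi₁) x
      have hA2sq : ∀ x : H, A₂ (A₂ x) = x := fun x =>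
        congrFun (congrArg DFunLike.coe hi₂) x
      have huU : u ∈ U := subset_span (by simp)
      have hA1uU : A₁ u ∈ U := subset_span (by simp)
      have hA2u : A₂ u = μ • u - A₁ u := by rw [← heig]; abel
      have hU1 : ∀ x ∈ U, A₁ x ∈ U := by
        intro x hx
        have : Submodule.map A₁ U ≤ U := by
          rw [hUdef, Submodule.map_span, span_le]
          rintro _ ⟨y, hy, rfl⟩
          rcases hy with rfl | rfl
          · exact hA1uU
          · simpa [hA1sq] using huU
        exact this ⟨x, hx, rfl⟩
      have hU2 : ∀ x ∈ U, A₂ x ∈ U := by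
        intro x hx
        have : Submodule.map A₂ U ≤ U := by
          rw [hUdef, Submodule.map_span, span_le]
          rintro _ ⟨y, hy, rfl⟩
          rcases hy with rfl | rfl
          · rw [hA2u]
            exact U.sub_mem (U.smul_mem μ huU) hA1uU
          · have h1 : A₁ u = μ • u - A₂ u := by rw [← heig]; abel
            have h2 : A₂ (A₁ u) = μ • A₂ u - u := by
              rw [h1, map_sub, map_smul, hA2sq]
            rw [h2, hA2u]
            exact U.sub_mem
              (U.smul_mem μ (U.sub_mem (U.smul_mem μ huU) hA1uU)) huU
        exact this ⟨x, hx, rfl⟩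
      have hUW : U ≤ W := by
        rw [hUdef, span_le]
        rintro y (rfl | rfl)
        · exact hvW
        · exact hW₁ u hvW
      have hUrank : finrank ℂ U ≤ 2 := by
        classical
        refine (finrank_span_le_card ({u, A₁ u} : Set H)).trans ?_
        simp [Set.toFinset_insert]
        exact Finset.card_insert_le _ _ |>.trans (by simp)
      set W' : Submodule ℂ H := W ⊓ Uᗮ with hW'def
      have horthW' : ∀ x ∈ W', ∀ y ∈ U, ⟪y, x⟫_ℂ = 0 := by
        rintro x ⟨hxW, hxO⟩ y hy
        exact (Submodule.mem_orthogonal U x).mp hxO y hy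
      have hW'1 : ∀ x ∈ W', A₁ x ∈ W' := by
        rintro x ⟨hxW, hxO⟩
        refine ⟨hW₁ x hxW, (Submodule.mem_orthogonal U (A₁ x)).mpr ?_⟩
        intro y hy
        rw [← hs₁ y x]
        exact (Submodule.mem_orthogonal U x).mp hxO (A₁ y) (hU1 y hy)
      have hW'2 : ∀ x ∈ W', A₂ x ∈ W' := by
        rintro x ⟨hxW, hxO⟩
        refine ⟨hW₂ x hxW, (Submodule.mem_orthogonal U (A₂ x)).mpr ?_⟩
        intro y hy
        rw [← hs₂ y x]
        exact (Submodule.mem_orthogonal U x).mp hxO (A₂ y) (hU2 y hy)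
      have hsup : U ⊔ W' = W := by
        refine le_antisymm (sup_le hUW inf_le_left) ?_
        intro x hx
        have hxd : x = (orthogonalProjection U x : H) +
            (x - orthogonalProjection U x) := (add_sub_cancel _ _).symm
        rw [hxd]
        refine Submodule.add_mem _ (Submodule.mem_sup_left
          (orthogonalProjection U x).2) (Submodule.mem_sup_right ?_)
        refine ⟨W.sub_mem hx (hUW (orthogonalProjection U x).2), ?_⟩
        exact U.sub_starProjection_mem_orthogonal x
      have hdisj : U ⊓ W' = ⊥ := by
        rw [eq_bot_iff]
        refine le_trans ?_ (U.orthogonal_disjoint.le_bot)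
        exact le_inf inf_le_left (inf_le_right.trans inf_le_right)
      have hrank' : finrank ℂ W' < n := by
        have : Nontrivial U := ⟨⟨u, huU⟩, 0, by simpa using hv0'⟩
        have hU0 : 0 < finrank ℂ U := finrank_pos
        have := Submodule.finrank_sup_add_finrank_inf_eq U W'
        rw [hsup, hdisj] at this
        simp at this
        omega
      obtain ⟨ι', hf', hd', V', hsup', horth', hdim', hinv'⟩ :=
        IH (finrank ℂ W') hrank' W' rfl hW'1 hW'2
      classical
      refine ⟨Option ι', inferInstance, inferInstance,
        fun o => o.elim U V', ?_, ?_, ?_, ?_⟩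
      · rw [iSup_option (fun o => o.elim U V')]
        simpa using hsup ▸ (by rw [hsup'] : U ⊔ ⨆ i, V' i = U ⊔ W')
      · have hUV' : ∀ i, ∀ x ∈ U, ∀ y ∈ V' i, ⟪x, y⟫_ℂ = 0 := by
          intro i x hx y hy
          exact horthW' y (le_trans (le_iSup V' i) hsup'.le hy) x hx
        rintro (_ | a) (_ | b) hab x hx y hy
        · exact absurd rfl hab
        · exact hUV' b x hx y hy
        · rw [← inner_conj_symm]
          simp [hUV' a y hy x hx]
        · exact horth' a b (by simpa using hab) x hx y hy
      · rintro (_ | a)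
        · exact hUrank
        · exact hdim' a
      · rintro (_ | a)
        · exact fun x hx => ⟨hU1 x hx, hU2 x hx⟩
        · exact hinv' a

/-- Jordan's lemma for two ±1-valued observables: the space decomposes
into an orthogonal direct sum of subspaces of dimension at most 2, each invariant
under both `A₁` and `A₂`. -/
theorem jordan_two_observables (H : Type*) [NormedAddCommGroup H]
    [InnerProductSpace ℂ H] [FiniteDimensional ℂ H]
    (A₁ A₂ : H →ₗ[ℂ] H) (hs₁ : A₁.IsSymmetric) (hs₂ : A₂.IsSymmetric)
    (hi₁ : A₁ ∘ₗ A₁ = LinearMap.id) (hi₂ : A₂ ∘ₗ A₂ = LinearMap.id) :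
    ∃ (ι : Type) (_ : Fintype ι) (_ : DecidableEq ι) (V : ι → Submodule ℂ H),
      DirectSum.IsInternal V ∧
      (∀ α β, α ≠ β → ∀ x ∈ V α, ∀ y ∈ V β, ⟪x, y⟫_ℂ = 0) ∧
      (∀ α, Module.finrank ℂ (V α) ≤ 2) ∧
      (∀ α, ∀ x ∈ V α, A₁ x ∈ V α ∧ A₂ x ∈ V α) := by
  obtain ⟨ι, hf, hd, V, hsup, horth, hdim, hinv⟩ :=
    jordan_aux H A₁ A₂ hs₁ hs₂ hi₁ hi₂ (finrank ℂ (⊤ : Submodule ℂ H)) ⊤ rfl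
      (fun x _ => trivial) (fun x _ => trivial)
  refine ⟨ι, hf, hd, V, ?_, horth, hdim, hinv⟩
  have hOrth : OrthogonalFamily ℂ (fun i => V i) (fun i => (V i).subtypeₗᵢ) := by
    intro i j hij x y
    exact horth i j hij x x.2 y y.2
  exact (DirectSum.isInternal_submodule_iff_iSupIndep_and_iSup_eq_top V).mpr
    ⟨hOrth.independent, hsup⟩
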